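/- Let λ be a Young diagram and j a nonempty column of λ that contains no special box, and set h = top(j). Then the boxes (h, j+1), (h−1, j+2), …, (1, j+h) all belong to λ. -/

import Mathlib

open scoped Classical

noncomputable section

namespace DriftKL

/-- `(i,j)` is a box of the Young diagram of `lam` (French notation, rows indexed
bottom-to-top, everything 1-indexed). -/
def InShape (lam : ℕ → ℕ) (i j : ℕ) : Prop := 1 ≤ i ∧ 1 ≤ j ∧ j ≤ lam i

/-- `lam` encodes a partition `λ₁ ≥ ⋯ ≥ λ_ℓ > 0` (1-indexed; `0` outside `[1,ℓ]`). -/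
def IsPartitionFun (ℓ : ℕ) (lam : ℕ → ℕ) : Prop :=
  (∀ i, 1 ≤ i → i ≤ ℓ → 1 ≤ lam i) ∧
  (∀ i j, 1 ≤ i → i ≤ j → j ≤ ℓ → lam j ≤ lam i) ∧
  (∀ i, i = 0 ∨ ℓ < i → lam i = 0)

/-- The Finset of boxes of the Young diagram of `lam`. -/
def shapeBoxes (ℓ : ℕ) (lam : ℕ → ℕ) : Finset (ℕ × ℕ) :=
  (Finset.Icc 1 ℓ ×ˢ Finset.Icc 1 (lam 1)).filter (fun p => p.2 ≤ lam p.1)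

/-- Semistandardness: positive entries, rows weakly increase left-to-right,
columns strictly increase bottom-to-top. -/
def IsSSYT (lam : ℕ → ℕ) (T : ℕ → ℕ → ℕ) : Prop :=
  (∀ i j, InShape lam i j → 1 ≤ T i j) ∧
  (∀ i j, InShape lam i j → InShape lam i (j+1) → T i j ≤ T i (j+1)) ∧
  (∀ i j, InShape lam i j → InShape lam (i+1) j → T i j < T (i+1) j)

/-- Flagged semistandard Young tableaux of shape `lam`, flagged by `b`,
represented as functions vanishing off the shape. -/
def SSYTset (lam b : ℕ → ℕ) : Set (ℕ → ℕ → ℕ) :=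
  {T | IsSSYT lam T ∧ (∀ i j, InShape lam i j → T i j ≤ b i) ∧
       (∀ i j, ¬ InShape lam i j → T i j = 0)}

/-- Boundary convention: `T(i,0) = 1` for `i > 0`, and `T(0,j) = 0`. -/
def TxC (T : ℕ → ℕ → ℕ) (i j : ℕ) : ℕ :=
  if i = 0 then 0 else if j = 0 then 1 else T i j

/-- The saturation `sat(T)`: `sat(T)(i,j) = [max{T(i,j-1), 1+T(i-1,j)}, T(i,j)]`. -/
def satF (lam : ℕ → ℕ) (T : ℕ → ℕ → ℕ) (i j : ℕ) : Finset ℕ :=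
  if InShape lam i j then
    Finset.Icc (max (TxC T i (j - 1)) (TxC T (i - 1) j + 1)) (T i j)
  else ∅

/-- `depth(T) = |sat(T)| - |λ|`. -/
def depthT (ℓ : ℕ) (lam : ℕ → ℕ) (T : ℕ → ℕ → ℕ) : ℕ :=
  (∑ p ∈ shapeBoxes ℓ lam, (satF lam T p.1 p.2).card) - (shapeBoxes ℓ lam).card

/-- Flagged set-valued semistandard fillings: each box carries a nonempty finite
set of positive integers bounded by the flag, such that every choice of one entry
per box is semistandard.  Off the shape the value is `∅`. -/
def SetSSYTset (lam b : ℕ → ℕ) : Set (ℕ → ℕ → Finset ℕ) :=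
  {U | (∀ i j, InShape lam i j → (U i j).Nonempty) ∧
       (∀ i j, ¬ InShape lam i j → U i j = ∅) ∧
       (∀ i j, InShape lam i j → ∀ x ∈ U i j, 1 ≤ x ∧ x ≤ b i) ∧
       (∀ T : ℕ → ℕ → ℕ, (∀ i j, InShape lam i j → T i j ∈ U i j) →
          (∀ i j, InShape lam i j → InShape lam i (j+1) → T i j ≤ T i (j+1)) ∧
          (∀ i j, InShape lam i j → InShape lam (i+1) j → T i j < T (i+1) j))}

/-- `ex(U) = |U| - |λ|`. -/
def exU (ℓ : ℕ) (lam : ℕ → ℕ) (U : ℕ → ℕ → Finset ℕ) : ℕ :=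
  (∑ p ∈ shapeBoxes ℓ lam, (U p.1 p.2).card) - (shapeBoxes ℓ lam).card

/-- The extension of a filling `T` of `λ` by `T(i,j) = ∞` if (`i > 0` and
`(i,j) ∉ λ`) or `j > λ₁`, and `T(0,j) = 0` for `1 ≤ j ≤ λ₁`. -/
def extT (lam : ℕ → ℕ) (T : ℕ → ℕ → ℕ) (i j : ℕ) : ℕ∞ :=
  if lam 1 < j then ⊤
  else if i = 0 then 0
  else if InShape lam i j then (T i j : ℕ∞) else ⊤

/-- `T` satisfies the recursion `T(i,j) = min{T(i+1,j) - 1, T(i-1,j+1) + 1}`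
at the box `(i,j)` (with the extension conventions). -/
def RecursionAt (lam : ℕ → ℕ) (T : ℕ → ℕ → ℕ) (i j : ℕ) : Prop :=
  (T i j : ℕ∞) = min (extT lam T (i + 1) j - 1) (extT lam T (i - 1) (j + 1) + 1)

/-- `(i,j)` is a northeast corner of `λ`. -/
def NECorner (lam : ℕ → ℕ) (i j : ℕ) : Prop :=
  InShape lam i j ∧ ¬ InShape lam (i + 1) j ∧ ¬ InShape lam i (j + 1)

/-- `top(j)`: the largest `i` with `(i,j) ∈ λ` (`0` if the column is empty). -/
def colTop (lam : ℕ → ℕ) (j : ℕ) : ℕ := sSup {i | InShape lam i j}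

/-- `|arm(i,j)|`. -/
def armLen (lam : ℕ → ℕ) (i j : ℕ) : ℕ := lam i - j

/-- `|leg(i,j)|`. -/
def legLen (lam : ℕ → ℕ) (i j : ℕ) : ℕ := colTop lam j - i

/-- `(p,q)` lies in `{(i,j)} ∪ arm(i,j) ∪ leg(i,j)`. -/
def InCross (lam : ℕ → ℕ) (i j p q : ℕ) : Prop :=
  (p = i ∧ j ≤ q ∧ q ≤ lam i) ∨ (q = j ∧ i ≤ p ∧ p ≤ colTop lam j)

/-- `(i,j) ∈ λ`, has equal arm and leg lengths, and no box of its cross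
satisfies `Prev` (the "already special" predicate). -/
def CandAt (lam : ℕ → ℕ) (Prev : ℕ → ℕ → Prop) (i j : ℕ) : Prop :=
  InShape lam i j ∧ armLen lam i j = legLen lam i j ∧
    ∀ p q, InCross lam i j p q → ¬ Prev p q

/-- `SpecialLevels lam z i j` holds iff `(i,j)` is `y`-special for some `y < z`:
a `z`-special box is one which is maximal (componentwise) among candidates
relative to the boxes that are `y`-special for `y < z`. -/
def SpecialLevels (lam : ℕ → ℕ) : ℕ → ℕ → ℕ → Prop
  | 0 => fun _ _ => False
  | z + 1 => fun i j =>
      SpecialLevels lam z i j ∨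
        (CandAt lam (SpecialLevels lam z) i j ∧
          ∀ p q, CandAt lam (SpecialLevels lam z) p q → i ≤ p → j ≤ q → i = p ∧ j = q)

/-- `(i,j)` is special, i.e. `z`-special for some `z`. -/
def IsSpecial (lam : ℕ → ℕ) (i j : ℕ) : Prop := ∃ z, SpecialLevels lam z i j

/-- The flag `b_i = max{m ≥ 1 : B_m ≥ λ_i + m - i}` attached to partitions `λ ⊆ B`. -/
def flagOfPart (lam B : ℕ → ℕ) (i : ℕ) : ℕ :=
  sSup {m : ℕ | 1 ≤ m ∧ (lam i : ℤ) + m - i ≤ (B m : ℤ)}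

lemma inShape_le_ell {ℓ : ℕ} {lam : ℕ → ℕ} (hlam : IsPartitionFun ℓ lam)
    {i j : ℕ} (h : InShape lam i j) : i ≤ ℓ := by
  by_contra hc
  have h0 := hlam.2.2 i (Or.inr (by omega))
  have h1 := h.2.1
  have h2 := h.2.2
  omega

lemma inShape_mem_shapeBoxes {ℓ : ℕ} {lam : ℕ → ℕ} (hlam : IsPartitionFun ℓ lam)
    {i j : ℕ} (h : InShape lam i j) : (i, j) ∈ shapeBoxes ℓ lam := by
  have hiℓ := inShape_le_ell hlam h
  have hlam1 : lam i ≤ lam 1 := hlam.2.1 1 i le_rfl h.1 hiℓ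
  exact Finset.mem_filter.mpr
    ⟨Finset.mem_product.mpr ⟨Finset.mem_Icc.mpr ⟨h.1, hiℓ⟩,
      Finset.mem_Icc.mpr ⟨h.2.1, le_trans h.2.2 hlam1⟩⟩, h.2.2⟩

lemma le_colTop {ℓ : ℕ} {lam : ℕ → ℕ} (hlam : IsPartitionFun ℓ lam)
    {i j : ℕ} (h : InShape lam i j) : i ≤ colTop lam j := by
  have hb : BddAbove {i | InShape lam i j} := by
    refine ⟨ℓ, fun x hx => ?_⟩
    exact inShape_le_ell hlam (Set.mem_setOf_eq ▸ hx)
  exact le_csSup hb (by exact h)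

lemma colTop_inShape {ℓ : ℕ} {lam : ℕ → ℕ} (hlam : IsPartitionFun ℓ lam)
    {i j : ℕ} (h : InShape lam i j) : InShape lam (colTop lam j) j := by
  have hb : BddAbove {i | InShape lam i j} := by
    refine ⟨ℓ, fun x hx => ?_⟩
    exact inShape_le_ell hlam (Set.mem_setOf_eq ▸ hx)
  have := Nat.sSup_mem (s := {i | InShape lam i j}) ⟨i, by exact h⟩ hb
  exact this

lemma specialLevels_props {lam : ℕ → ℕ} :
    ∀ {z i j : ℕ}, SpecialLevels lam z i j →
      InShape lam i j ∧ armLen lam i j = legLen lam i j := by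
  intro z
  induction z with
  | zero => intro i j h; exact h.elim
  | succ z ih =>
    intro i j h
    rcases h with h | h
    · exact ih h
    · exact ⟨h.1.1, h.1.2.1⟩

/-- If a box is a candidate at every level, the sets of special boxes grow
strictly forever. -/
lemma card_le_special {ℓ : ℕ} {lam : ℕ → ℕ} (hlam : IsPartitionFun ℓ lam)
    {a c : ℕ} (hcand : ∀ z, CandAt lam (SpecialLevels lam z) a c) :
    ∀ z, z ≤ ((shapeBoxes ℓ lam).filter (fun b => SpecialLevels lam z b.1 b.2)).card := by
  intro z
  induction z with
  | zero => exact Nat.zero_le _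
  | succ z ih =>
    set C := (shapeBoxes ℓ lam).filter
      (fun b => CandAt lam (SpecialLevels lam z) b.1 b.2) with hC
    have hmem : (a, c) ∈ C :=
      Finset.mem_filter.mpr ⟨inShape_mem_shapeBoxes hlam (hcand z).1, hcand z⟩
    obtain ⟨m, hmC, hmax⟩ := Finset.exists_maximal ⟨_, hmem⟩
    have hmax : ∀ x ∈ C, ¬ m < x := fun x hx hlt => hlt.not_ge (hmax hx hlt.le)
    have hmcand : CandAt lam (SpecialLevels lam z) m.1 m.2 := (Finset.mem_filter.mp hmC).2
    have hmspec : SpecialLevels lam (z+1) m.1 m.2 := by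
      right
      refine ⟨hmcand, ?_⟩
      intro p q hpq h1 h2
      have hb : (p, q) ∈ C := Finset.mem_filter.mpr ⟨inShape_mem_shapeBoxes hlam hpq.1, hpq⟩
      by_contra hne
      have hne' : m ≠ (p, q) := by
        intro he
        exact hne ⟨by rw [he], by rw [he]⟩
      exact hmax _ hb (lt_of_le_of_ne (Prod.le_def.mpr ⟨h1, h2⟩) hne')
    have hmnot : ¬ SpecialLevels lam z m.1 m.2 :=
      hmcand.2.2 m.1 m.2 (Or.inl ⟨rfl, le_rfl, hmcand.1.2.2⟩)
    have hsub : (shapeBoxes ℓ lam).filter (fun b => SpecialLevels lam z b.1 b.2) ⊂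
        (shapeBoxes ℓ lam).filter (fun b => SpecialLevels lam (z+1) b.1 b.2) := by
      have hss : (shapeBoxes ℓ lam).filter (fun b => SpecialLevels lam z b.1 b.2) ⊆
          (shapeBoxes ℓ lam).filter (fun b => SpecialLevels lam (z+1) b.1 b.2) := by
        intro x hx
        rcases Finset.mem_filter.mp hx with ⟨h1, h2⟩
        exact Finset.mem_filter.mpr ⟨h1, Or.inl h2⟩
      rw [Finset.ssubset_iff_of_subset hss]
      exact ⟨m, Finset.mem_filter.mpr ⟨inShape_mem_shapeBoxes hlam hmcand.1, hmspec⟩,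
        fun hm => hmnot (Finset.mem_filter.mp hm).2⟩
    have := Finset.card_lt_card hsub
    omega

/-- If column `j` of `λ` is nonempty and contains no special
box, then with `h = top(j)` the boxes `(h, j+1), (h-1, j+2), …, (1, j+h)` all
belong to `λ`. -/
theorem statement17 (ℓ : ℕ) (lam : ℕ → ℕ)
    (hlam : IsPartitionFun ℓ lam)
    (j : ℕ) (hj : InShape lam 1 j)
    (hnos : ¬ ∃ i, IsSpecial lam i j) :
    ∀ k, 1 ≤ k → k ≤ colTop lam j →
      InShape lam (colTop lam j + 1 - k) (j + k) := by
  intro k hk1 hk2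
  set h := colTop lam j with hh
  by_contra hnot
  have hj1 : 1 ≤ j := hj.2.1
  have hhj : InShape lam h j := colTop_inShape hlam hj
  have hh1 : 1 ≤ h := le_colTop hlam hj
  have hhl : h ≤ ℓ := inShape_le_ell hlam hhj
  -- the failing box yields a row with arm ≤ leg
  have hi0 : ∃ i, 1 ≤ i ∧ i ≤ h ∧ lam i + i ≤ j + h := by
    refine ⟨h + 1 - k, by omega, by omega, ?_⟩
    by_contra hc
    set i₀ := h + 1 - k with hi₀
    exact hnot ⟨by omega, by omega, by omega⟩
  set A : Set ℕ := {i | 1 ≤ i ∧ i ≤ h ∧ lam i + i ≤ j + h} with hA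
  have hAbdd : BddAbove A := ⟨h, fun x hx => (Set.mem_setOf_eq ▸ hx).2.1⟩
  set a := sSup A with ha
  have haA : 1 ≤ a ∧ a ≤ h ∧ lam a + a ≤ j + h := Nat.sSup_mem hi0 hAbdd
  have habove : ∀ i, a < i → i ≤ h → j + h < lam i + i := by
    intro i h1 h2
    by_contra hc
    have hin : i ∈ A := ⟨by omega, h2, by omega⟩
    have := le_csSup hAbdd hin
    omega
  have harm : lam a + a = j + h := by
    rcases eq_or_lt_of_le haA.2.1 with he | hlt
    · have hjh : j ≤ lam h := hhj.2.2
      have h1 := haA.2.2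
      rw [he] at h1 ⊢
      omega
    · have h1 := habove (a+1) (by omega) (by omega)
      have h2 : lam (a+1) ≤ lam a := hlam.2.1 a (a+1) haA.1 (by omega) (by omega)
      have h3 := haA.2.2
      omega
  have hsa : InShape lam a j := ⟨haA.1, hj1, by omega⟩
  -- (a, j) is a candidate at every level
  have hcand : ∀ z, CandAt lam (SpecialLevels lam z) a j := by
    intro z
    refine ⟨hsa, ?_, ?_⟩
    · show lam a - j = colTop lam j - a
      rw [← hh]
      omega
    · intro p q hpq hsp
      obtain ⟨hins, harml⟩ := specialLevels_props hsp
      rcases hpq with ⟨hp, hq1, hq2⟩ | ⟨hq, hp1, hp2⟩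
      · subst hp
        rcases eq_or_lt_of_le hq1 with he | hqgt
        · rw [← he] at hsp
          exact hnos ⟨a, z, hsp⟩
        · -- geometric lemma: no other arm = leg box in the arm of (a, j)
          set r := colTop lam q with hr
          have har : a ≤ r := le_colTop hlam hins
          have hq3 : q ≤ lam a := hins.2.2
          have heq : lam a + a = q + r := by
            have : lam a - q = r - a := by rw [hr]; exact harml
            omega
          have hq0 : 1 ≤ q := by omega
          have h4 := habove (r+1) (by omega) (by omega)
          have hin2 : InShape lam (r+1) q := ⟨by omega, hq0, by omega⟩
          have := le_colTop hlam hin2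
          rw [← hr] at this
          omega
      · subst hq
        exact hnos ⟨p, z, hsp⟩
  have hg := card_le_special hlam hcand ((shapeBoxes ℓ lam).card + 1)
  have hle := Finset.card_filter_le (shapeBoxes ℓ lam)
    (fun b => SpecialLevels lam ((shapeBoxes ℓ lam).card + 1) b.1 b.2)
  omega

end DriftKL
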